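/- Let a ≠ b in S¹ = ℝ/ℤ and let {F_p}_{p∈[a,b]} be an intrinsic circle system on the closed arc [a,b]. Suppose F_a = F_b and F_a ∩ (a,b) = ∅. Then there exists c ∈ (a,b) such that F_c is connected and F_c ⊆ (a,b). -/

import Mathlib

open Filter Topology

noncomputable section

/-- The circle S¹ = ℝ/ℤ. -/
abbrev S1 := AddCircle (1 : ℝ)

/-- The projection ℝ → S¹. -/
def pr (x : ℝ) : S1 := (x : S1)

/-- The closed arc from `a` to `b` (for real representatives `a ≤ b`). -/
def arcCC (a b : ℝ) : Set S1 := pr '' Set.Icc a b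

/-- The half-open arc `[a,b)`. -/
def arcCO (a b : ℝ) : Set S1 := pr '' Set.Ico a b

/-- The half-open arc `(a,b]`. -/
def arcOC (a b : ℝ) : Set S1 := pr '' Set.Ioc a b

/-- The open arc `(a,b)`. -/
def arcOO (a b : ℝ) : Set S1 := pr '' Set.Ioo a b

/-- `I` is an arc of the circle: the image of an interval of positive length
less than 1 (closed, half-open, or open). -/
def IsArc (I : Set S1) : Prop :=
  ∃ a b : ℝ, a < b ∧ b < a + 1 ∧
    (I = arcCC a b ∨ I = arcCO a b ∨ I = arcOC a b ∨ I = arcOO a b)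

/-- `p ≺ q ≺ r` cyclically: the three points admit representatives
`p̃ < q̃ < r̃ < p̃ + 1`. -/
def cyc3 (p q r : S1) : Prop :=
  ∃ a b c : ℝ, pr a = p ∧ pr b = q ∧ pr c = r ∧ a < b ∧ b < c ∧ c < a + 1

/-- `p ≺ q ≺ r ≺ s` cyclically: the four points admit representatives
`p̃ < q̃ < r̃ < s̃ < p̃ + 1`. -/
def cyc4 (p q r s : S1) : Prop :=
  ∃ a b c d : ℝ, pr a = p ∧ pr b = q ∧ pr c = r ∧ pr d = s ∧
    a < b ∧ b < c ∧ c < d ∧ d < a + 1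

/-- `x` is an isolated point of the set `F`. -/
def IsolatedIn (x : S1) (F : Set S1) : Prop :=
  ∃ U : Set S1, IsOpen U ∧ x ∈ U ∧ U ∩ F = {x}

/-- The set `F` has exactly two connected components. -/
def TwoComponents (F : Set S1) : Prop :=
  ∃ x ∈ F, ∃ y ∈ F, connectedComponentIn F x ≠ connectedComponentIn F y ∧
    ∀ z ∈ F, connectedComponentIn F z = connectedComponentIn F x ∨
      connectedComponentIn F z = connectedComponentIn F y

/-- An intrinsic circle system on an index set `I ⊆ S¹`: a family of closed
sets `F p` (for `p ∈ I`) satisfying axioms (I0)–(I3). -/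
structure IsIntrinsicCircleSystem (I : Set S1) (F : S1 → Set S1) : Prop where
  /-- The sets of the family are closed. -/
  isClosed : ∀ p ∈ I, IsClosed (F p)
  /-- (I0) `p ∈ F p`. -/
  mem_self : ∀ p ∈ I, p ∈ F p
  /-- (I1) if `F p` and `F q` meet then they coincide. -/
  eq_of_inter : ∀ p ∈ I, ∀ q ∈ I, (F p ∩ F q).Nonempty → F p = F q
  /-- (I2) if `p' ∈ F p`, `q' ∈ F q` and `p ≺ q ≺ p' ≺ q'` cyclically then
  `F p = F q`. -/
  eq_of_cyc : ∀ p ∈ I, ∀ q ∈ I, ∀ p' ∈ F p, ∀ q' ∈ F q,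
    cyc4 p q p' q' → F p = F q
  /-- (I3) closedness under limits of sequences from the interior of `I`. -/
  mem_of_tendsto : ∀ (pn qn : ℕ → S1) (p q : S1),
    (∀ n, pn n ∈ interior I) → (∀ n, qn n ∈ interior I) →
    p ∈ I → q ∈ I →
    Tendsto pn atTop (nhds p) → Tendsto qn atTop (nhds q) →
    (∀ n, qn n ∈ F (pn n)) → q ∈ F p

lemma pr_exists_rep (x : ℝ) (w : S1) : ∃ t : ℝ, t ∈ Set.Ioc x (x + 1) ∧ pr t = w := by
  have hp : (0:ℝ) < 1 := one_pos
  refine ⟨(QuotientAddGroup.equivIocMod hp x w : ℝ), (QuotientAddGroup.equivIocMod hp x w).2, ?_⟩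
  have h := (QuotientAddGroup.equivIocMod hp x).symm_apply_apply w
  rw [QuotientAddGroup.equivIocMod_symm_apply] at h
  exact h

lemma pr_inj {x s t : ℝ} (hs : s ∈ Set.Ioc x (x + 1)) (ht : t ∈ Set.Ioc x (x + 1))
    (h : pr s = pr t) : s = t := by
  have h2 : s - t ∈ AddSubgroup.zmultiples (1:ℝ) :=
    (QuotientAddGroup.eq_iff_sub_mem).mp h
  obtain ⟨n, hn⟩ := AddSubgroup.mem_zmultiples_iff.mp h2
  have hn' : s - t = (n:ℝ) := by simpa using hn.symm
  have h3 : |(n:ℝ)| < 1 := by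
    rw [← hn', abs_lt]
    constructor <;> linarith [hs.1, hs.2, ht.1, ht.2]
  have h4 : n = 0 := by
    have : |n| < 1 := by exact_mod_cast (by rwa [← Int.cast_abs] at h3 : ((|n| : ℤ) : ℝ) < 1)
    rw [abs_lt] at this; omega
  have : s - t = 0 := by rw [hn', h4]; simp
  linarith

lemma pr_add_one (x : ℝ) : pr (x + 1) = pr x := by
  have : (x+1) - x ∈ AddSubgroup.zmultiples (1:ℝ) := by
    simp [AddSubgroup.mem_zmultiples]
  exact (QuotientAddGroup.eq_iff_sub_mem).mpr this

lemma pr_cont : Continuous pr := AddCircle.continuous_mk' 1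

lemma arcOO_elim {x y : ℝ} {w : S1} (h : w ∈ arcOO x y) :
    ∃ t, t ∈ Set.Ioo x y ∧ pr t = w := h

/-- Containment lemma: for a sub-pair `[x,y] ⊆ [a,b]` with `F x = F y` and
`F x ∩ (x,y) = ∅`, every `p ∈ (x,y)` has `F p ⊆ (x,y)` and `F p ∩ F x = ∅`. -/
lemma containment (a b : ℝ) (hb1 : b < a + 1) (F : S1 → Set S1)
    (hF : IsIntrinsicCircleSystem (arcCC a b) F)
    {x y : ℝ} (hax : a ≤ x) (hyb : y ≤ b)
    (hxyF : F (pr x) = F (pr y)) (hd : F (pr x) ∩ arcOO x y = ∅)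
    {p : ℝ} (hp : p ∈ Set.Ioo x y) :
    F (pr p) ⊆ arcOO x y ∧ F (pr p) ∩ F (pr x) = ∅ := by
  have hxy : x < y := hp.1.trans hp.2
  have hy1 : y < x + 1 := by linarith
  have hxI : pr x ∈ arcCC a b := Set.mem_image_of_mem pr ⟨hax, by linarith⟩
  have hyI : pr y ∈ arcCC a b := Set.mem_image_of_mem pr ⟨by linarith, hyb⟩
  have hpI : pr p ∈ arcCC a b :=
    Set.mem_image_of_mem pr ⟨by linarith [hp.1], by linarith [hp.2]⟩
  have h0 : pr p ∈ F (pr p) := hF.mem_self _ hpI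
  have hne : F (pr p) ≠ F (pr x) := by
    intro h
    have hmem : pr p ∈ F (pr x) ∩ arcOO x y := ⟨h ▸ h0, Set.mem_image_of_mem pr hp⟩
    rw [hd] at hmem
    exact hmem
  have hdisj2 : F (pr p) ∩ F (pr x) = ∅ := by
    rw [Set.eq_empty_iff_forall_notMem]
    intro w hw
    exact hne (hF.eq_of_inter _ hpI _ hxI ⟨w, hw⟩)
  refine ⟨?_, hdisj2⟩
  intro w hw
  obtain ⟨t, ht, rfl⟩ := pr_exists_rep x w
  rcases lt_trichotomy t y with h1 | h1 | h1
  · exact Set.mem_image_of_mem pr ⟨ht.1, h1⟩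
  · exfalso
    have hty : pr t ∈ F (pr x) := by
      rw [hxyF, h1]
      exact hF.mem_self _ hyI
    exact Set.eq_empty_iff_forall_notMem.mp hdisj2 (pr t) ⟨hw, hty⟩
  · rcases eq_or_lt_of_le ht.2 with h2 | h2
    · exfalso
      have hww : pr t = pr x := by rw [h2, pr_add_one]
      have htx : pr t ∈ F (pr x) := by rw [hww]; exact hF.mem_self _ hxI
      exact Set.eq_empty_iff_forall_notMem.mp hdisj2 (pr t) ⟨hw, htx⟩
    · exfalso
      have hy' : pr y ∈ F (pr x) := by rw [hxyF]; exact hF.mem_self _ hyI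
      have := hF.eq_of_cyc _ hxI _ hpI _ hy' _ hw
        ⟨x, p, y, t, rfl, rfl, rfl, rfl, hp.1, hp.2, h1, h2⟩
      exact hne this.symm

/-- Bisection step: assuming no good `c` exists, any invariant pair `(x,y)`
has a strictly smaller invariant pair of at most half the length. -/
lemma step (a b : ℝ) (hb1 : b < a + 1) (F : S1 → Set S1)
    (hF : IsIntrinsicCircleSystem (arcCC a b) F)
    (hc : ∀ c ∈ arcOO a b, IsConnected (F c) → ¬ F c ⊆ arcOO a b)
    {x y : ℝ} (hax : a ≤ x) (hxy : x < y) (hyb : y ≤ b)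
    (hxyF : F (pr x) = F (pr y)) (hd : F (pr x) ∩ arcOO x y = ∅) :
    ∃ x' y', x < x' ∧ x' < y' ∧ y' < y ∧ y' - x' ≤ (y - x)/2 ∧
      F (pr x') = F (pr y') ∧ F (pr x') ∩ arcOO x' y' = ∅ := by
  set m := (x + y)/2 with hm_def
  have hm : m ∈ Set.Ioo x y := ⟨by simp only [hm_def]; linarith, by simp only [hm_def]; linarith⟩
  obtain ⟨hsub, hdisj2⟩ := containment a b hb1 F hF hax hyb hxyF hd hm
  have harc : arcOO x y ⊆ arcOO a b := Set.image_mono (Set.Ioo_subset_Ioo hax hyb)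
  have hmI : pr m ∈ arcCC a b :=
    Set.mem_image_of_mem pr ⟨by linarith [hm.1], by linarith [hm.2]⟩
  have hmF : pr m ∈ F (pr m) := hF.mem_self _ hmI
  have hy1 : y < x + 1 := by linarith
  set K : Set ℝ := pr ⁻¹' (F (pr m)) ∩ Set.Icc x y with hK_def
  have hKsub : K ⊆ Set.Ioo x y := by
    rintro t ⟨htF, htI⟩
    rcases eq_or_lt_of_le htI.1 with h | h
    · exfalso
      have hxm : pr x ∈ F (pr m) := by rw [h]; exact htF
      exact Set.eq_empty_iff_forall_notMem.mp hdisj2 (pr x) ⟨hxm, hF.mem_self _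
        (Set.mem_image_of_mem pr ⟨hax, by linarith⟩)⟩
    · obtain ⟨s, hs, hst⟩ := arcOO_elim (hsub htF)
      have : s = t := pr_inj ⟨hs.1, by linarith [hs.2]⟩ ⟨h, by linarith [htI.2]⟩ hst
      rw [← this]; exact hs
  have hKim : pr '' K = F (pr m) := by
    apply Set.Subset.antisymm
    · rintro w ⟨t, ht, rfl⟩; exact ht.1
    · intro w hw
      obtain ⟨s, hs, rfl⟩ := arcOO_elim (hsub hw)
      exact ⟨s, ⟨hw, Set.Ioo_subset_Icc_self hs⟩, rfl⟩
  have hnc : ¬ IsConnected (F (pr m)) :=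
    fun h => hc (pr m) (harc (Set.mem_image_of_mem pr hm)) h (hsub.trans harc)
  have hKnord : ¬ ∀ u ∈ K, ∀ v ∈ K, u ≤ v → Set.Icc u v ⊆ K := by
    intro hord
    have hpc : IsPreconnected K := isPreconnected_iff_ordConnected.mpr
      (Set.ordConnected_iff.mpr fun u hu v hv huv => hord u hu v hv huv)
    have himg : IsPreconnected (pr '' K) := hpc.image pr pr_cont.continuousOn
    rw [hKim] at himg
    exact hnc ⟨⟨pr m, hmF⟩, himg⟩
  push_neg at hKnord
  obtain ⟨u, hu, v, hv, huv, hnsub⟩ := hKnord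
  obtain ⟨z, hz, hzK⟩ := Set.not_subset.mp hnsub
  have hKcl : IsClosed K := ((hF.isClosed _ hmI).preimage pr_cont).inter isClosed_Icc
  set K1 := K ∩ Set.Icc u z with hK1_def
  set K2 := K ∩ Set.Icc z v with hK2_def
  have hu1 : u ∈ K1 := ⟨hu, le_refl u, hz.1⟩
  have hv2 : v ∈ K2 := ⟨hv, hz.2, le_refl v⟩
  have hbdd1 : BddAbove K1 := bddAbove_Icc.mono Set.inter_subset_right
  have hbdd2 : BddBelow K2 := bddBelow_Icc.mono Set.inter_subset_right
  set x' := sSup K1 with hx'_def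
  set y' := sInf K2 with hy'_def
  have hx'mem : x' ∈ K1 := (hKcl.inter isClosed_Icc).csSup_mem ⟨u, hu1⟩ hbdd1
  have hy'mem : y' ∈ K2 := (hKcl.inter isClosed_Icc).csInf_mem ⟨v, hv2⟩ hbdd2
  have hgap : ∀ t ∈ K, t ∉ Set.Ioo x' y' := by
    intro t htK hti
    rcases le_total t z with h | h
    · have h1 : t ∈ K1 := ⟨htK, (le_csSup hbdd1 hu1).trans hti.1.le, h⟩
      exact absurd (le_csSup hbdd1 h1) (not_le.mpr hti.1)
    · have h2 : t ∈ K2 := ⟨htK, h, hti.2.le.trans (csInf_le hbdd2 hv2)⟩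
      exact absurd (csInf_le hbdd2 h2) (not_le.mpr hti.2)
  have hx'z : x' < z := lt_of_le_of_ne hx'mem.2.2 (fun h => hzK (by rw [← h]; exact hx'mem.1))
  have hzy' : z < y' := lt_of_le_of_ne hy'mem.2.1 (fun h => hzK (by rw [h]; exact hy'mem.1))
  have hx'y' : x' < y' := hx'z.trans hzy'
  obtain ⟨hxx', hx'y⟩ := hKsub hx'mem.1
  obtain ⟨hxy', hy'y⟩ := hKsub hy'mem.1
  have hmK : m ∈ K := ⟨hmF, hm.1.le, hm.2.le⟩
  have hm' : m ≤ x' ∨ y' ≤ m := by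
    have h := hgap m hmK
    rw [Set.mem_Ioo, not_and_or, not_lt, not_lt] at h
    exact h
  have hlen : y' - x' ≤ (y - x)/2 := by
    have hmeq : m = (x + y)/2 := hm_def
    rcases hm' with h | h <;> linarith
  have hx'I : pr x' ∈ arcCC a b := Set.mem_image_of_mem pr ⟨by linarith, by linarith⟩
  have hy'I : pr y' ∈ arcCC a b := Set.mem_image_of_mem pr ⟨by linarith, by linarith⟩
  have hx'F : F (pr x') = F (pr m) :=
    hF.eq_of_inter _ hx'I _ hmI ⟨pr x', hF.mem_self _ hx'I, hx'mem.1.1⟩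
  have hy'F : F (pr y') = F (pr m) :=
    hF.eq_of_inter _ hy'I _ hmI ⟨pr y', hF.mem_self _ hy'I, hy'mem.1.1⟩
  refine ⟨x', y', hxx', hx'y', hy'y, hlen, hx'F.trans hy'F.symm, ?_⟩
  rw [Set.eq_empty_iff_forall_notMem]
  rintro w ⟨hwF, hwA⟩
  obtain ⟨s, hs, rfl⟩ := arcOO_elim hwA
  have hsK : s ∈ K := by
    refine ⟨?_, by constructor <;> [linarith [hs.1]; linarith [hs.2]]⟩
    rw [Set.mem_preimage, ← hx'F]
    exact hwF
  exact hgap s hsK hs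
/-- **Lemma on intrinsic circle systems (Kneser-type lemma).**
If `F a = F b` and `F a` misses the open arc `(a,b)`, then some `c ∈ (a,b)` has
`F c` connected and contained in `(a,b)`. -/
theorem intrinsicCircleSystem_exists_connected
    (a b : ℝ) (hab : a < b) (hb1 : b < a + 1)
    (F : S1 → Set S1)
    (hF : IsIntrinsicCircleSystem (arcCC a b) F)
    (heq : F (pr a) = F (pr b))
    (hdisj : F (pr a) ∩ arcOO a b = ∅) :
    ∃ c ∈ arcOO a b, IsConnected (F c) ∧ F c ⊆ arcOO a b := by

  by_contra hcon
  push_neg at hcon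
  -- hcon : ∀ c ∈ arcOO a b, IsConnected (F c) → ¬ F c ⊆ arcOO a b
  let T := {q : ℝ × ℝ // a ≤ q.1 ∧ q.1 < q.2 ∧ q.2 ≤ b ∧
    F (pr q.1) = F (pr q.2) ∧ F (pr q.1) ∩ arcOO q.1 q.2 = ∅}
  have hstep : ∀ s : T, ∃ s' : T,
      s.1.1 < s'.1.1 ∧ s'.1.2 < s.1.2 ∧ s'.1.2 - s'.1.1 ≤ (s.1.2 - s.1.1)/2 := by
    rintro ⟨⟨x, y⟩, hax, hxy, hyb, hF1, hF2⟩
    obtain ⟨x', y', h1, h2, h3, h4, h5, h6⟩ := step a b hb1 F hF hcon hax hxy hyb hF1 hF2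
    exact ⟨⟨(x', y'), le_of_lt (lt_of_le_of_lt hax h1), h2, le_trans (le_of_lt h3) hyb, h5, h6⟩,
      h1, h3, h4⟩
  choose next hn1 hn2 hn3 using hstep
  let s0 : T := ⟨(a, b), le_refl a, hab, le_refl b, heq, hdisj⟩
  let seq : ℕ → T := fun n => next^[n] s0
  let A : ℕ → ℝ := fun n => (seq n).1.1
  let B : ℕ → ℝ := fun n => (seq n).1.2
  have hseq_succ : ∀ n, seq (n + 1) = next (seq n) :=
    fun n => Function.iterate_succ_apply' next n s0
  have hA0 : A 0 = a := rfl
  have hB0 : B 0 = b := rfl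
  have hInv : ∀ n, a ≤ A n ∧ A n < B n ∧ B n ≤ b ∧
      F (pr (A n)) = F (pr (B n)) ∧ F (pr (A n)) ∩ arcOO (A n) (B n) = ∅ :=
    fun n => (seq n).2
  have hAsucc : ∀ n, A n < A (n + 1) := by
    intro n
    have := hn1 (seq n)
    simpa [A, hseq_succ n] using this
  have hBsucc : ∀ n, B (n + 1) < B n := by
    intro n
    have := hn2 (seq n)
    simpa [B, hseq_succ n] using this
  have hLsucc : ∀ n, B (n + 1) - A (n + 1) ≤ (B n - A n)/2 := by
    intro n
    have := hn3 (seq n)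
    simpa [A, B, hseq_succ n] using this
  have hAmono : StrictMono A := strictMono_nat_of_lt_succ hAsucc
  have hBanti : StrictAnti B := strictAnti_nat_of_succ_lt hBsucc
  have hbound : ∀ n, B n - A n ≤ (b - a)/2^n := by
    intro n
    induction n with
    | zero => simp [hA0, hB0]
    | succ k ih =>
      have h1 := hLsucc k
      have h2 : (B k - A k)/2 ≤ (b - a)/2^k/2 := by linarith
      calc B (k+1) - A (k+1) ≤ (B k - A k)/2 := h1
        _ ≤ (b - a)/2^k/2 := h2
        _ = (b - a)/2^(k+1) := by ring
  have hAB : ∀ k n, A k < B n := by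
    intro k n
    rcases le_total k n with h | h
    · exact lt_of_le_of_lt (hAmono.monotone h) (hInv n).2.1
    · exact lt_of_lt_of_le (hInv k).2.1 (hBanti.antitone h)
  have hbddA : BddAbove (Set.range A) := ⟨b, by rintro _ ⟨n, rfl⟩; exact le_of_lt (hB0 ▸ hAB n 0)⟩
  set c := ⨆ n, A n with hc_def
  have hAc : ∀ n, A n ≤ c := fun n => le_ciSup hbddA n
  have hcB : ∀ n, c ≤ B n := fun n => ciSup_le (fun k => le_of_lt (hAB k n))
  have hAc' : ∀ n, A n < c := fun n => lt_of_lt_of_le (hAsucc n) (hAc (n + 1))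
  have hcB' : ∀ n, c < B n := fun n => lt_of_le_of_lt (hcB (n + 1)) (hBsucc n)
  have hc_ab : c ∈ Set.Ioo a b := ⟨hA0 ▸ hAc' 0, hB0 ▸ hcB' 0⟩
  have hcI : pr c ∈ arcCC a b := Set.mem_image_of_mem pr ⟨hc_ab.1.le, hc_ab.2.le⟩
  have hsubn : ∀ n, F (pr c) ⊆ arcOO (A n) (B n) := by
    intro n
    exact (containment a b hb1 F hF (hInv n).1 (hInv n).2.2.1 (hInv n).2.2.2.1
      (hInv n).2.2.2.2 ⟨hAc' n, hcB' n⟩).1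
  have hsing : F (pr c) = {pr c} := by
    apply Set.Subset.antisymm
    · intro w hw
      obtain ⟨t, ht, rfl⟩ := pr_exists_rep a w
      have htn : ∀ n, t ∈ Set.Ioo (A n) (B n) := by
        intro n
        obtain ⟨s, hs, hst⟩ := arcOO_elim (hsubn n hw)
        have hs' : s ∈ Set.Ioc a (a + 1) :=
          ⟨lt_of_le_of_lt (hInv n).1 hs.1, by linarith [hs.2, (hInv n).2.2.1]⟩
        rw [← pr_inj hs' ht hst]
        exact hs
      have h1 : c ≤ t := ciSup_le fun n => (htn n).1.le
      have h2 : t ≤ c := by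
        by_contra hlt
        push_neg at hlt
        have htc : (0:ℝ) < t - c := by linarith
        obtain ⟨n, hn⟩ := pow_unbounded_of_one_lt ((b - a)/(t - c)) (by norm_num : (1:ℝ) < 2)
        have h2n : (0:ℝ) < 2^n := by positivity
        rw [div_lt_iff₀ htc] at hn
        have hkey : (b - a)/2^n < t - c := by rw [div_lt_iff₀ h2n]; linarith
        have hh1 := (htn n).2
        have hh2 := hbound n
        have hh3 := hAc' n
        linarith
      have : t = c := le_antisymm h2 h1
      rw [this]
      rfl
    · intro w hw
      rw [Set.mem_singleton_iff] at hw
      rw [hw]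
      exact hF.mem_self _ hcI
  exact hcon (pr c) (Set.mem_image_of_mem pr hc_ab)
    (by rw [hsing]; exact isConnected_singleton)
    (by rw [hsing]; exact Set.singleton_subset_iff.mpr (Set.mem_image_of_mem pr hc_ab))
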